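/- Let V₁ = K(W,X,Z) + M₁ with M₁ = Y·K(W,X,Z)[Y]_{(Y)} (a rank-1 discrete valuation domain of L = K(W,X,Y,Z)), and let V₂ = K(W) + M₂ be the rank-3 valuation domain of L obtained by successive pullbacks through K(W,X,Y)+Z·K(W,X,Y)[Z]_{(Z)} and K(W,X)[Y]_{(Y+1)} and K(W)[X]_{(X)}. Then V₁ and V₂ are incomparable valuation domains of L (neither contains the other). -/

import Mathlib

noncomputable section

variable (K : Type*) [Field K]

/-- The field `L = K(W,X,Y,Z)`, realized as the fraction field of `K[W,X,Y,Z]`. -/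
abbrev LL := FractionRing (MvPolynomial (Fin 4) K)

/-- The image of the indeterminate `W` in `L`. -/
def vW : LL K := algebraMap (MvPolynomial (Fin 4) K) (LL K) (MvPolynomial.X 0)
/-- The image of the indeterminate `X` in `L`. -/
def vX : LL K := algebraMap (MvPolynomial (Fin 4) K) (LL K) (MvPolynomial.X 1)
/-- The image of the indeterminate `Y` in `L`. -/
def vY : LL K := algebraMap (MvPolynomial (Fin 4) K) (LL K) (MvPolynomial.X 2)
/-- The image of the indeterminate `Z` in `L`. -/
def vZ : LL K := algebraMap (MvPolynomial (Fin 4) K) (LL K) (MvPolynomial.X 3)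

/-- The subring `F[u]` of `L` generated by a subset `F` together with `u`. -/
def polyRing (F : Set (LL K)) (u : LL K) : Subring (LL K) :=
  Subring.closure (F ∪ {u})

/-- The localization `F[u]_{(u)}` of `F[u]` at the prime `(u)`, as a subset of `L`:
elements `p/q` with `p, q ∈ F[u]` and `q ∉ (u)`. -/
def locSet (F : Set (LL K)) (u : LL K) : Set (LL K) :=
  {a | ∃ p ∈ polyRing K F u, ∃ q ∈ polyRing K F u,
    (¬ ∃ b ∈ polyRing K F u, q = u * b) ∧ a * q = p}

/-- The maximal ideal `u·F[u]_{(u)}` of `F[u]_{(u)}`, as a subset of `L`. -/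
def maxSet (F : Set (LL K)) (u : LL K) : Set (LL K) :=
  {a | ∃ p ∈ polyRing K F u, ∃ q ∈ polyRing K F u,
    (¬ ∃ b ∈ polyRing K F u, q = u * b) ∧ (∃ b ∈ polyRing K F u, p = u * b) ∧ a * q = p}

/-- The subfield `K(W,X,Z)` of `L`. -/
def Fwxz : Set (LL K) := (IntermediateField.adjoin K {vW K, vX K, vZ K} : IntermediateField K (LL K))
/-- The subfield `K(W,X,Y)` of `L`. -/
def Fwxy : Set (LL K) := (IntermediateField.adjoin K {vW K, vX K, vY K} : IntermediateField K (LL K))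
/-- The subfield `K(W,X)` of `L`. -/
def Fwx : Set (LL K) := (IntermediateField.adjoin K {vW K, vX K} : IntermediateField K (LL K))
/-- The subfield `K(W)` of `L`. -/
def Fw : Set (LL K) := (IntermediateField.adjoin K {vW K} : IntermediateField K (LL K))

/-- The rank-one discrete valuation domain `V₁ = K(W,X,Z) + M₁ = K(W,X,Z)[Y]_{(Y)}`
of `L`, with `M₁ = Y·K(W,X,Z)[Y]_{(Y)}`. -/
def V₁ : Set (LL K) := locSet K (Fwxz K) (vY K)

/-- The valuation domain `V = K(W,X,Y) + M = K(W,X,Y)[Z]_{(Z)}` of `L`,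
with `M = Z·K(W,X,Y)[Z]_{(Z)}`. -/
def Vdom : Set (LL K) := locSet K (Fwxy K) (vZ K)
/-- The maximal ideal `M = Z·K(W,X,Y)[Z]_{(Z)}` of `V`. -/
def Mdom : Set (LL K) := maxSet K (Fwxy K) (vZ K)

/-- `K(W,X)[Y]_{(Y+1)}`, a valuation domain of `K(W,X,Y)`. -/
def W₁ : Set (LL K) := locSet K (Fwx K) (vY K + 1)
/-- The maximal ideal `(Y+1)·K(W,X)[Y]_{(Y+1)}`. -/
def MW₁ : Set (LL K) := maxSet K (Fwx K) (vY K + 1)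

/-- `K(W)[X]_{(X)}`, a valuation domain of `K(W,X)`. -/
def U₀ : Set (LL K) := locSet K (Fw K) (vX K)

/-- The rank-three valuation domain `V₂ = K(W) + M₂` of `L`, obtained by successive
pullbacks: `V₂ = ψ⁻¹(K(W)[X]_{(X)})` where `V' = τ⁻¹(K(W,X)[Y]_{(Y+1)})`,
`τ : V → K(W,X,Y)` is the residue map of `V = K(W,X,Y) + Z·K(W,X,Y)[Z]_{(Z)}`
(so `τ(a)` is the unique `t ∈ K(W,X,Y)` with `a - t ∈ M`), and `ψ : V' → K(W,X)`
is the residue map of `V'` (with `ψ(a)` the unique `s ∈ K(W,X)` with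
`τ(a) - s ∈ (Y+1)·K(W,X)[Y]_{(Y+1)}`). -/
def V₂ : Set (LL K) :=
  {a | a ∈ Vdom K ∧ ∃ t ∈ Fwxy K, a - t ∈ Mdom K ∧ t ∈ W₁ K ∧
        ∃ s ∈ Fwx K, t - s ∈ MW₁ K ∧ s ∈ U₀ K}

namespace IncompAux

set_option synthInstance.maxHeartbeats 1000000
set_option maxHeartbeats 4000000

variable {K}

/-- Every element of `polyRing K ↑F u` is a polynomial in `u` with coefficients in `F`. -/
lemma exists_aeval (F : IntermediateField K (LL K)) (u b : LL K)
    (hb : b ∈ polyRing K (F : Set (LL K)) u) :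
    ∃ P : Polynomial F, Polynomial.aeval u P = b := by
  have hle : polyRing K (F : Set (LL K)) u ≤ (Algebra.adjoin F {u}).toSubring := by
    refine Subring.closure_le.2 ?_
    rintro y (hy | rfl)
    · exact (Algebra.adjoin F ({u} : Set (LL K))).algebraMap_mem (⟨y, hy⟩ : F)
    · exact Algebra.self_mem_adjoin_singleton F _
  have hmem : b ∈ Algebra.adjoin F ({u} : Set (LL K)) := hle hb
  rw [Algebra.adjoin_singleton_eq_range_aeval] at hmem
  obtain ⟨P, hP⟩ := hmem
  exact ⟨P, hP⟩

lemma not_one_eq_mul {F : IntermediateField K (LL K)} {u : LL K}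
    (htr : Transcendental F u) :
    ¬ ∃ b ∈ polyRing K (F : Set (LL K)) u, (1 : LL K) = u * b := by
  rintro ⟨b, hb, heq⟩
  obtain ⟨P, hP⟩ := exists_aeval F u b hb
  refine htr ⟨Polynomial.X * P - 1, ?_, ?_⟩
  · intro h
    have h0 : ((Polynomial.X * P - 1 : Polynomial F)).coeff 0 = (0 : Polynomial F).coeff 0 :=
      congrArg (fun p => Polynomial.coeff p 0) h
    simp [Polynomial.mul_coeff_zero] at h0
  · have h1 : Polynomial.aeval u (Polynomial.X * P - 1) = u * b - 1 := by
      rw [map_sub, map_mul, Polynomial.aeval_X, hP, map_one]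
    rw [h1, ← heq, sub_self]

lemma not_sub_one_eq_mul {F : IntermediateField K (LL K)} {u : LL K}
    (htr : Transcendental F u) :
    ¬ ∃ b ∈ polyRing K (F : Set (LL K)) u, u - 1 = u * b := by
  rintro ⟨b, hb, heq⟩
  obtain ⟨P, hP⟩ := exists_aeval F u b hb
  refine htr ⟨Polynomial.X * P - Polynomial.X + 1, ?_, ?_⟩
  · intro h
    have h0 : ((Polynomial.X * P - Polynomial.X + 1 : Polynomial F)).coeff 0
        = (0 : Polynomial F).coeff 0 := congrArg (fun p => Polynomial.coeff p 0) h
    simp [Polynomial.mul_coeff_zero] at h0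
  · have h1 : Polynomial.aeval u (Polynomial.X * P - Polynomial.X + 1) = u * b - u + 1 := by
      rw [map_add, map_sub, map_mul, Polynomial.aeval_X, hP, map_one]
    rw [h1, ← heq]
    ring

/-- If `a` together with the family `x` is algebraically independent over `K`, then `a`
is transcendental over the intermediate field generated by the `x i`. -/
lemma transcendental_adjoin_range {ι : Type} (x : ι → LL K) (a : LL K)
    (h : AlgebraicIndependent K (fun o : Option ι => o.elim a x)) :
    Transcendental (IntermediateField.adjoin K (Set.range x)) a := by
  have hx : AlgebraicIndependent K x := h.comp some (Option.some_injective ι)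
  set F := IntermediateField.adjoin K (Set.range x) with hF
  intro halg
  obtain ⟨P, hP0, hPa⟩ := halg
  let i : FractionRing (MvPolynomial ι K) →ₐ[K] LL K :=
    IsFractionRing.liftAlgHom (algebraicIndependent_iff_injective_aeval.1 hx)
  let P' : Polynomial (FractionRing (MvPolynomial ι K)) := P.map hx.reprField.toRingHom
  have hP'0 : P' ≠ 0 :=
    (Polynomial.map_ne_zero_iff hx.reprField.toRingHom.injective).mpr hP0
  have h1 : Polynomial.eval₂ i.toRingHom a P' = 0 := by
    rw [Polynomial.eval₂_map]
    have hcr : i.toRingHom.comp hx.reprField.toRingHom = algebraMap F (LL K) := by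
      refine RingHom.ext fun y => ?_
      exact AlgHom.congr_fun hx.liftAlgHom_comp_reprField y
    rw [hcr, ← Polynomial.aeval_def, hPa]
  set N : Polynomial (MvPolynomial ι K) :=
    IsLocalization.integerNormalization (nonZeroDivisors (MvPolynomial ι K)) P' with hN
  have hN0 : N ≠ 0 := fun h0 => hP'0 (IsFractionRing.integerNormalization_eq_zero_iff.mp h0)
  have h2 := IsLocalization.integerNormalization_eval₂_eq_zero
    (M := nonZeroDivisors (MvPolynomial ι K)) i.toRingHom P' h1
  have h3 : i.toRingHom.comp (algebraMap (MvPolynomial ι K) (FractionRing (MvPolynomial ι K)))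
      = (MvPolynomial.aeval x : MvPolynomial ι K →ₐ[K] LL K).toRingHom := by
    refine RingHom.ext fun p => ?_
    simp [i, IsFractionRing.liftAlgHom_apply]
  rw [h3] at h2
  let Φ : Polynomial (MvPolynomial ι K) →ₐ[K] LL K :=
    Polynomial.eval₂AlgHom (MvPolynomial.aeval x) a (fun r => Commute.all _ _)
  have key : Φ.comp (MvPolynomial.optionEquivLeft K ι).toAlgHom
      = MvPolynomial.aeval (fun o : Option ι => o.elim a x) := by
    refine MvPolynomial.algHom_ext fun o => ?_
    cases o <;>
      simp [Φ, MvPolynomial.optionEquivLeft_X_none, MvPolynomial.optionEquivLeft_X_some]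
  have h4 : MvPolynomial.aeval (fun o : Option ι => o.elim a x)
      ((MvPolynomial.optionEquivLeft K ι).symm N) = 0 := by
    rw [← key]
    show Φ ((MvPolynomial.optionEquivLeft K ι) ((MvPolynomial.optionEquivLeft K ι).symm N)) = 0
    rw [AlgEquiv.apply_symm_apply]
    exact h2
  have h5 : (MvPolynomial.optionEquivLeft K ι).symm N = 0 :=
    h (h4.trans (map_zero _).symm)
  exact hN0 (by rw [← (MvPolynomial.optionEquivLeft K ι).apply_symm_apply N, h5, map_zero])

variable (K) in
lemma ai_v : AlgebraicIndependent K
    (fun i : Fin 4 => algebraMap (MvPolynomial (Fin 4) K) (LL K) (MvPolynomial.X i)) := by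
  have h2 := (MvPolynomial.algebraicIndependent_X (Fin 4) K).map'
    (f := IsScalarTower.toAlgHom K (MvPolynomial (Fin 4) K) (LL K))
    (IsFractionRing.injective _ _)
  exact h2

lemma range3 (a b c : LL K) : Set.range ![a, b, c] = {a, b, c} := by
  ext y
  simp [Matrix.range_cons, Matrix.range_empty]
  tauto

lemma range2 (a b : LL K) : Set.range ![a, b] = {a, b} := by
  ext y
  simp [Matrix.range_cons, Matrix.range_empty]
  tauto

lemma range1 (a : LL K) : Set.range ![a] = {a} := by
  simp [Matrix.range_cons, Matrix.range_empty]

lemma aiY_wxz : AlgebraicIndependent K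
    (fun o : Option (Fin 3) => o.elim (vY K) ![vW K, vX K, vZ K]) := by
  have h := (ai_v K).comp (fun o : Option (Fin 3) => o.elim 2 ![0, 1, 3]) (by decide)
  have he : ((fun i : Fin 4 => algebraMap (MvPolynomial (Fin 4) K) (LL K) (MvPolynomial.X i)) ∘
      (fun o : Option (Fin 3) => o.elim 2 ![0, 1, 3]))
      = fun o : Option (Fin 3) => o.elim (vY K) ![vW K, vX K, vZ K] := by
    funext o
    rcases o with _ | j
    · rfl
    · fin_cases j <;> rfl
  rwa [he] at h

lemma aiZ_wxy : AlgebraicIndependent K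
    (fun o : Option (Fin 3) => o.elim (vZ K) ![vW K, vX K, vY K]) := by
  have h := (ai_v K).comp (fun o : Option (Fin 3) => o.elim 3 ![0, 1, 2]) (by decide)
  have he : ((fun i : Fin 4 => algebraMap (MvPolynomial (Fin 4) K) (LL K) (MvPolynomial.X i)) ∘
      (fun o : Option (Fin 3) => o.elim 3 ![0, 1, 2]))
      = fun o : Option (Fin 3) => o.elim (vZ K) ![vW K, vX K, vY K] := by
    funext o
    rcases o with _ | j
    · rfl
    · fin_cases j <;> rfl
  rwa [he] at h

lemma aiY_wx : AlgebraicIndependent K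
    (fun o : Option (Fin 2) => o.elim (vY K) ![vW K, vX K]) := by
  have h := (ai_v K).comp (fun o : Option (Fin 2) => o.elim 2 ![0, 1]) (by decide)
  have he : ((fun i : Fin 4 => algebraMap (MvPolynomial (Fin 4) K) (LL K) (MvPolynomial.X i)) ∘
      (fun o : Option (Fin 2) => o.elim 2 ![0, 1]))
      = fun o : Option (Fin 2) => o.elim (vY K) ![vW K, vX K] := by
    funext o
    rcases o with _ | j
    · rfl
    · fin_cases j <;> rfl
  rwa [he] at h

lemma aiX_w : AlgebraicIndependent K
    (fun o : Option (Fin 1) => o.elim (vX K) ![vW K]) := by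
  have h := (ai_v K).comp (fun o : Option (Fin 1) => o.elim 1 ![0]) (by decide)
  have he : ((fun i : Fin 4 => algebraMap (MvPolynomial (Fin 4) K) (LL K) (MvPolynomial.X i)) ∘
      (fun o : Option (Fin 1) => o.elim 1 ![0]))
      = fun o : Option (Fin 1) => o.elim (vX K) ![vW K] := by
    funext o
    rcases o with _ | j
    · rfl
    · fin_cases j <;> rfl
  rwa [he] at h

lemma trY_wxz : Transcendental (IntermediateField.adjoin K {vW K, vX K, vZ K}) (vY K) := by
  have h := transcendental_adjoin_range ![vW K, vX K, vZ K] (vY K) aiY_wxz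
  rwa [range3] at h

lemma trZ_wxy : Transcendental (IntermediateField.adjoin K {vW K, vX K, vY K}) (vZ K) := by
  have h := transcendental_adjoin_range ![vW K, vX K, vY K] (vZ K) aiZ_wxy
  rwa [range3] at h

lemma trY_wx : Transcendental (IntermediateField.adjoin K {vW K, vX K}) (vY K) := by
  have h := transcendental_adjoin_range ![vW K, vX K] (vY K) aiY_wx
  rwa [range2] at h

lemma trX_w : Transcendental (IntermediateField.adjoin K {vW K}) (vX K) := by
  have h := transcendental_adjoin_range ![vW K] (vX K) aiX_w
  rwa [range1] at h

lemma trY1_wx : Transcendental (IntermediateField.adjoin K {vW K, vX K}) (vY K + 1) := by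
  have h := (trY_wx (K := K)).aeval (Polynomial.X + Polynomial.C 1)
    (by rw [Polynomial.natDegree_X_add_C]; exact one_ne_zero)
    (by rw [Polynomial.leadingCoeff_X_add_C]; exact Submonoid.one_mem _)
  simpa using h

lemma vY_ne_zero : vY K ≠ 0 := by
  intro h
  exact MvPolynomial.X_ne_zero 2
    (IsFractionRing.injective (MvPolynomial (Fin 4) K) (LL K) (by rw [map_zero]; exact h))

lemma vZ_ne_zero : vZ K ≠ 0 := by
  intro h
  exact MvPolynomial.X_ne_zero 3
    (IsFractionRing.injective (MvPolynomial (Fin 4) K) (LL K) (by rw [map_zero]; exact h))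

end IncompAux

/-- **Statement.** The valuation domains `V₁` and `V₂` of `L = K(W,X,Y,Z)` are
incomparable: neither contains the other. -/
theorem V₁_V₂_incomparable : ¬ V₁ K ⊆ V₂ K ∧ ¬ V₂ K ⊆ V₁ K := by
  constructor
  · -- `Z⁻¹ ∈ V₁ \ V₂`
    intro hsub
    have hzne : vZ K ≠ 0 := IncompAux.vZ_ne_zero
    have hmem1 : (vZ K)⁻¹ ∈ V₁ K := by
      have hzF : vZ K ∈ IntermediateField.adjoin K {vW K, vX K, vZ K} :=
        IntermediateField.subset_adjoin K _ (by simp)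
      have hzinv : (vZ K)⁻¹ ∈ Fwxz K :=
        (IntermediateField.adjoin K {vW K, vX K, vZ K}).inv_mem hzF
      exact ⟨(vZ K)⁻¹, Subring.subset_closure (Set.mem_union_left _ hzinv),
        1, Subring.one_mem _, IncompAux.not_one_eq_mul IncompAux.trY_wxz, mul_one _⟩
    obtain ⟨⟨p, hp, q, hq, hqn, heq⟩, -⟩ := hsub hmem1
    exact hqn ⟨p, hp, by rw [← heq, ← mul_assoc, mul_inv_cancel₀ hzne, one_mul]⟩
  · -- `Y⁻¹ ∈ V₂ \ V₁`
    intro hsub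
    have hyne : vY K ≠ 0 := IncompAux.vY_ne_zero
    have hmem2 : (vY K)⁻¹ ∈ V₂ K := by
      have hYF : vY K ∈ IntermediateField.adjoin K {vW K, vX K, vY K} :=
        IntermediateField.subset_adjoin K _ (by simp)
      have hYinv : (vY K)⁻¹ ∈ Fwxy K :=
        (IntermediateField.adjoin K {vW K, vX K, vY K}).inv_mem hYF
      have hu : vY K + 1 ∈ polyRing K (Fwx K) (vY K + 1) :=
        Subring.subset_closure (Set.mem_union_right _ rfl)
      have hYpoly : vY K ∈ polyRing K (Fwx K) (vY K + 1) := by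
        simpa using Subring.sub_mem _ hu (Subring.one_mem _)
      have hnsub : ¬ ∃ b ∈ polyRing K (Fwx K) (vY K + 1), vY K = (vY K + 1) * b := by
        have h := IncompAux.not_sub_one_eq_mul (IncompAux.trY1_wx (K := K))
        simpa [Fwx] using h
      refine ⟨⟨(vY K)⁻¹, Subring.subset_closure (Set.mem_union_left _ hYinv),
          1, Subring.one_mem _, IncompAux.not_one_eq_mul IncompAux.trZ_wxy, mul_one _⟩,
        (vY K)⁻¹, hYinv, ?_, ?_, -1, ?_, ?_, ?_⟩
      · -- `a - t = 0 ∈ Mdom`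
        rw [sub_self]
        exact ⟨0, Subring.zero_mem _, 1, Subring.one_mem _,
          IncompAux.not_one_eq_mul IncompAux.trZ_wxy,
          ⟨0, Subring.zero_mem _, (mul_zero _).symm⟩, by rw [zero_mul]⟩
      · -- `t ∈ W₁`
        exact ⟨1, Subring.one_mem _, vY K, hYpoly, hnsub, inv_mul_cancel₀ hyne⟩
      · -- `s = -1 ∈ Fwx`
        exact (IntermediateField.adjoin K {vW K, vX K}).neg_mem
          ((IntermediateField.adjoin K {vW K, vX K}).one_mem)
      · -- `t - s ∈ MW₁`
        refine ⟨vY K + 1, hu, vY K, hYpoly, hnsub,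
          ⟨1, Subring.one_mem _, (mul_one _).symm⟩, ?_⟩
        rw [sub_neg_eq_add, add_mul, inv_mul_cancel₀ hyne, one_mul]
        exact add_comm 1 (vY K)
      · -- `s ∈ U₀`
        exact ⟨-1, Subring.neg_mem _ (Subring.one_mem _), 1, Subring.one_mem _,
          IncompAux.not_one_eq_mul IncompAux.trX_w, mul_one _⟩
    obtain ⟨p, hp, q, hq, hqn, heq⟩ := hsub hmem2
    exact hqn ⟨p, hp, by rw [← heq, ← mul_assoc, mul_inv_cancel₀ hyne, one_mul]⟩

end
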